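/- Let F₁, F₂ ∈ ℝ² and a₁, a₂ ∈ ℝ with 2a₁ > ‖F₁‖, 2a₂ > ‖F₂‖, and (F₁, a₁) ≠ (F₂, a₂). Then the set {z ∈ ℝ² : ‖z‖ + ‖z − F₁‖ = 2a₁ and ‖z‖ + ‖z − F₂‖ = 2a₂} has at most two elements. (Two distinct ellipses sharing the focus at the origin intersect in at most two points; in particular any Kepler flight ellipse intersects the focused conic boundary in at most two points.) -/

import Mathlib

lemma nsq (z : EuclideanSpace ℝ (Fin 2)) : ‖z‖^2 = z 0^2 + z 1^2 := by
  rw [EuclideanSpace.norm_eq, Real.sq_sqrt (by positivity)]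
  simp [Fin.sum_univ_two, sq_abs]

lemma conic (F : EuclideanSpace ℝ (Fin 2)) (a : ℝ) (z : EuclideanSpace ℝ (Fin 2))
    (hz : ‖z‖ + ‖z - F‖ = 2 * a) :
    4*a*‖z‖ = 2*(z 0 * F 0 + z 1 * F 1) + (4*a^2 - F 0^2 - F 1^2) := by
  have h' : ‖z - F‖ ^ 2 = (2*a - ‖z‖)^2 := by
    rw [show ‖z-F‖ = 2*a - ‖z‖ from by linarith]
  have e1 := nsq z
  have e2 := nsq (z - F)
  have hz0 : (z - F) 0 = z 0 - F 0 := rfl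
  have hz1 : (z - F) 1 = z 1 - F 1 := rfl
  rw [hz0, hz1] at e2
  linear_combination h' + e1 - e2

lemma point_step (a₁ v0 v1 x₁ y₁ n₁ x y n p₁ q₁ : ℝ)
    (hV : 0 < v0^2 + v1^2)
    (hortho : (x - x₁)*v0 + (y - y₁)*v1 = 0)
    (hs₁ : n₁^2 = x₁^2 + y₁^2) (hs : n^2 = x^2 + y^2)
    (e1 : 4*a₁*n₁ = 2*(x₁*p₁ + y₁*q₁) + (4*a₁^2 - p₁^2 - q₁^2))
    (e : 4*a₁*n = 2*(x*p₁ + y*q₁) + (4*a₁^2 - p₁^2 - q₁^2))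
    (hd : ¬(x = x₁ ∧ y = y₁)) :
    ∃ t : ℝ, t ≠ 0 ∧ x = x₁ - t*v1 ∧ y = y₁ + t*v0 ∧
      (16*a₁^2*(v0^2+v1^2) - 4*(v0*q₁ - v1*p₁)^2) * t
        + (32*a₁^2*(y₁*v0 - x₁*v1) - 4*(v0*q₁-v1*p₁)*(2*(x₁*p₁+y₁*q₁) + (4*a₁^2 - p₁^2 - q₁^2))) = 0 := by
  have hVne : (v0^2 + v1^2) ≠ 0 := ne_of_gt hV
  set t := ((y - y₁)*v0 - (x - x₁)*v1) / (v0^2+v1^2) with ht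
  have hx : x = x₁ - t*v1 := by
    rw [ht]; field_simp; linear_combination v0 * hortho
  have hy : y = y₁ + t*v0 := by
    rw [ht]; field_simp; linear_combination v1 * hortho
  have htne : t ≠ 0 := by
    intro h0
    exact hd ⟨by rw [hx, h0]; ring, by rw [hy, h0]; ring⟩
  refine ⟨t, htne, hx, hy, ?_⟩
  have sq1 : 16*a₁^2*(x₁^2+y₁^2) = (2*(x₁*p₁+y₁*q₁) + (4*a₁^2 - p₁^2 - q₁^2))^2 := by
    linear_combination (4*a₁*n₁ + 2*(x₁*p₁+y₁*q₁) + (4*a₁^2 - p₁^2 - q₁^2)) * e1 - 16*a₁^2 * hs₁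
  have sq : 16*a₁^2*(x^2+y^2) = (2*(x*p₁+y*q₁) + (4*a₁^2 - p₁^2 - q₁^2))^2 := by
    linear_combination (4*a₁*n + 2*(x*p₁+y*q₁) + (4*a₁^2 - p₁^2 - q₁^2)) * e - 16*a₁^2 * hs
  rw [hx, hy] at sq
  have hfac : t * ((16*a₁^2*(v0^2+v1^2) - 4*(v0*q₁ - v1*p₁)^2) * t
        + (32*a₁^2*(y₁*v0 - x₁*v1) - 4*(v0*q₁-v1*p₁)*(2*(x₁*p₁+y₁*q₁) + (4*a₁^2 - p₁^2 - q₁^2)))) = 0 := by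
    linear_combination sq - sq1
  exact (mul_eq_zero.mp hfac).resolve_left htne

lemma Apos (a₁ v0 v1 p₁ q₁ : ℝ) (hV : 0 < v0^2 + v1^2) (hf : p₁^2 + q₁^2 < 4*a₁^2) :
    0 < 16*a₁^2*(v0^2 + v1^2) - 4*(v0*q₁ - v1*p₁)^2 := by
  nlinarith [sq_nonneg (v0*p₁ + v1*q₁), mul_pos hV (show (0:ℝ) < 4*a₁^2 - (p₁^2+q₁^2) by linarith)]

lemma core (a₁ a₂ p₁ q₁ p₂ q₂ x₁ y₁ n₁ x₂ y₂ n₂ x₃ y₃ n₃ : ℝ)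
    (ha₁ : 0 < a₁) (ha₂ : 0 < a₂)
    (hf₁ : p₁^2 + q₁^2 < 4*a₁^2) (hf₂ : p₂^2 + q₂^2 < 4*a₂^2)
    (hne : ¬(p₁ = p₂ ∧ q₁ = q₂ ∧ a₁ = a₂))
    (hs₁ : n₁^2 = x₁^2 + y₁^2) (hs₂ : n₂^2 = x₂^2 + y₂^2) (hs₃ : n₃^2 = x₃^2 + y₃^2)
    (e11 : 4*a₁*n₁ = 2*(x₁*p₁ + y₁*q₁) + (4*a₁^2 - p₁^2 - q₁^2))
    (e12 : 4*a₁*n₂ = 2*(x₂*p₁ + y₂*q₁) + (4*a₁^2 - p₁^2 - q₁^2))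
    (e13 : 4*a₁*n₃ = 2*(x₃*p₁ + y₃*q₁) + (4*a₁^2 - p₁^2 - q₁^2))
    (e21 : 4*a₂*n₁ = 2*(x₁*p₂ + y₁*q₂) + (4*a₂^2 - p₂^2 - q₂^2))
    (e22 : 4*a₂*n₂ = 2*(x₂*p₂ + y₂*q₂) + (4*a₂^2 - p₂^2 - q₂^2))
    (e23 : 4*a₂*n₃ = 2*(x₃*p₂ + y₃*q₂) + (4*a₂^2 - p₂^2 - q₂^2))
    (hd₂ : ¬(x₂ = x₁ ∧ y₂ = y₁)) (hd₃ : ¬(x₃ = x₁ ∧ y₃ = y₁)) :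
    x₂ = x₃ ∧ y₂ = y₃ := by
  -- the radical line
  have line₁ : 2*(x₁*(a₂*p₁ - a₁*p₂) + y₁*(a₂*q₁ - a₁*q₂))
      + (a₂*(4*a₁^2 - p₁^2 - q₁^2) - a₁*(4*a₂^2 - p₂^2 - q₂^2)) = 0 := by
    linear_combination a₁ * e21 - a₂ * e11
  have line₂ : 2*(x₂*(a₂*p₁ - a₁*p₂) + y₂*(a₂*q₁ - a₁*q₂))
      + (a₂*(4*a₁^2 - p₁^2 - q₁^2) - a₁*(4*a₂^2 - p₂^2 - q₂^2)) = 0 := by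
    linear_combination a₁ * e22 - a₂ * e12
  have line₃ : 2*(x₃*(a₂*p₁ - a₁*p₂) + y₃*(a₂*q₁ - a₁*q₂))
      + (a₂*(4*a₁^2 - p₁^2 - q₁^2) - a₁*(4*a₂^2 - p₂^2 - q₂^2)) = 0 := by
    linear_combination a₁ * e23 - a₂ * e13
  by_cases hv : a₂*p₁ - a₁*p₂ = 0 ∧ a₂*q₁ - a₁*q₂ = 0
  · -- same ellipse: contradiction with hne
    obtain ⟨hp, hq⟩ := hv
    exfalso
    have hK : a₂*(4*a₁^2 - p₁^2 - q₁^2) - a₁*(4*a₂^2 - p₂^2 - q₂^2) = 0 := by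
      linear_combination line₁ - 2*x₁*hp - 2*y₁*hq
    have hXY : a₂^2*(p₁^2+q₁^2) - a₁^2*(p₂^2+q₂^2) = 0 := by
      linear_combination (a₂*p₁ + a₁*p₂) * hp + (a₂*q₁ + a₁*q₂) * hq
    have key : a₁ * ((a₁ - a₂) * (4*a₂^2 - (p₂^2+q₂^2))) = 0 := by
      linear_combination a₂ * hK + hXY
    have h4 : 0 < 4*a₂^2 - (p₂^2+q₂^2) := by linarith
    have ha : a₁ = a₂ := by
      rcases mul_eq_zero.mp key with h | h
      · exact absurd h (ne_of_gt ha₁)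
      · rcases mul_eq_zero.mp h with h | h
        · linarith
        · linarith
    have hp' : p₁ = p₂ := by
      have h' : a₂ * p₁ = a₂ * p₂ := by linear_combination hp + p₂ * ha
      exact mul_left_cancel₀ (ne_of_gt ha₂) h'
    have hq' : q₁ = q₂ := by
      have h' : a₂ * q₁ = a₂ * q₂ := by linear_combination hq + q₂ * ha
      exact mul_left_cancel₀ (ne_of_gt ha₂) h'
    exact hne ⟨hp', hq', ha⟩
  · -- proper line: at most two intersection points
    have hV : 0 < (a₂*p₁ - a₁*p₂)^2 + (a₂*q₁ - a₁*q₂)^2 := by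
      rcases not_and_or.mp hv with h | h <;> positivity
    have ho₂ : (x₂ - x₁)*(a₂*p₁ - a₁*p₂) + (y₂ - y₁)*(a₂*q₁ - a₁*q₂) = 0 := by
      linear_combination (line₂ - line₁) / 2
    have ho₃ : (x₃ - x₁)*(a₂*p₁ - a₁*p₂) + (y₃ - y₁)*(a₂*q₁ - a₁*q₂) = 0 := by
      linear_combination (line₃ - line₁) / 2
    obtain ⟨t₂, ht₂, hx₂, hy₂, hq₂⟩ := point_step a₁ _ _ x₁ y₁ n₁ x₂ y₂ n₂ p₁ q₁ hV ho₂ hs₁ hs₂ e11 e12 hd₂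
    obtain ⟨t₃, ht₃, hx₃, hy₃, hq₃⟩ := point_step a₁ _ _ x₁ y₁ n₁ x₃ y₃ n₃ p₁ q₁ hV ho₃ hs₁ hs₃ e11 e13 hd₃
    have hA : 0 < 16*a₁^2*((a₂*p₁ - a₁*p₂)^2 + (a₂*q₁ - a₁*q₂)^2)
        - 4*((a₂*p₁ - a₁*p₂)*q₁ - (a₂*q₁ - a₁*q₂)*p₁)^2 :=
      Apos a₁ _ _ p₁ q₁ hV hf₁
    set A := 16*a₁^2*((a₂*p₁ - a₁*p₂)^2 + (a₂*q₁ - a₁*q₂)^2)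
        - 4*((a₂*p₁ - a₁*p₂)*q₁ - (a₂*q₁ - a₁*q₂)*p₁)^2 with hAdef
    have htt : t₂ = t₃ := by
      have h23 : A * t₂ = A * t₃ := by linarith
      exact mul_left_cancel₀ (ne_of_gt hA) h23
    constructor
    · rw [hx₂, hx₃, htt]
    · rw [hy₂, hy₃, htt]

/-- **Two distinct ellipses with a common focus at the origin meet in at most two points.**
If `2a₁ > ‖F₁‖`, `2a₂ > ‖F₂‖` and `(F₁, a₁) ≠ (F₂, a₂)`, then the set of points `z` with
`‖z‖ + ‖z − F₁‖ = 2a₁` and `‖z‖ + ‖z − F₂‖ = 2a₂` has at most two elements.  In particular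
any Kepler flight ellipse intersects the focused conic boundary in at most two points. -/
theorem ellipses_common_focus_intersect_at_most_two
    (F₁ F₂ : EuclideanSpace ℝ (Fin 2)) (a₁ a₂ : ℝ)
    (h₁ : 2 * a₁ > ‖F₁‖) (h₂ : 2 * a₂ > ‖F₂‖)
    (hne : (F₁, a₁) ≠ (F₂, a₂)) :
    ({z : EuclideanSpace ℝ (Fin 2) |
        ‖z‖ + ‖z - F₁‖ = 2 * a₁ ∧ ‖z‖ + ‖z - F₂‖ = 2 * a₂}).encard ≤ 2 := by
  set S := {z : EuclideanSpace ℝ (Fin 2) |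
      ‖z‖ + ‖z - F₁‖ = 2 * a₁ ∧ ‖z‖ + ‖z - F₂‖ = 2 * a₂} with hS
  by_cases hsub : S.Subsingleton
  · exact le_trans (Set.encard_le_one_iff.mpr fun a b ha hb => hsub ha hb) one_le_two
  · rw [Set.not_subsingleton_iff] at hsub
    obtain ⟨z, hz, w, hw, hzw⟩ := hsub
    have ha₁ : 0 < a₁ := by have := norm_nonneg F₁; linarith
    have ha₂ : 0 < a₂ := by have := norm_nonneg F₂; linarith
    have hf₁ : F₁ 0^2 + F₁ 1^2 < 4*a₁^2 := by
      have := nsq F₁; nlinarith [norm_nonneg F₁]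
    have hf₂ : F₂ 0^2 + F₂ 1^2 < 4*a₂^2 := by
      have := nsq F₂; nlinarith [norm_nonneg F₂]
    have hne' : ¬(F₁ 0 = F₂ 0 ∧ F₁ 1 = F₂ 1 ∧ a₁ = a₂) := by
      rintro ⟨h0, h1, ha⟩
      apply hne
      have hF : F₁ = F₂ := PiLp.ext fun i => by fin_cases i <;> assumption
      rw [hF, ha]
    have key : ∀ m ∈ S, m ≠ z → m = w := by
      intro m hm hmz
      have hcw := core a₁ a₂ (F₁ 0) (F₁ 1) (F₂ 0) (F₂ 1)
        (z 0) (z 1) ‖z‖ (w 0) (w 1) ‖w‖ (m 0) (m 1) ‖m‖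
        ha₁ ha₂ hf₁ hf₂ hne'
        (nsq z) (nsq w) (nsq m)
        (conic F₁ a₁ z hz.1) (conic F₁ a₁ w hw.1) (conic F₁ a₁ m hm.1)
        (conic F₂ a₂ z hz.2) (conic F₂ a₂ w hw.2) (conic F₂ a₂ m hm.2)
        (fun h => hzw (PiLp.ext fun i => by fin_cases i <;> simp [h.1, h.2]).symm)
        (fun h => hmz (PiLp.ext fun i => by fin_cases i <;> simp [h.1, h.2]))
      exact PiLp.ext fun i => by fin_cases i <;> simp [hcw.1, hcw.2]
    have hsub2 : S ⊆ {z, w} := by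
      intro m hm
      rcases eq_or_ne m z with h | h
      · exact Or.inl h
      · exact Or.inr (key m hm h)
    calc S.encard ≤ ({z, w} : Set (EuclideanSpace ℝ (Fin 2))).encard := Set.encard_mono hsub2
      _ = 2 := Set.encard_pair hzw
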